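/- Let p > 1 and α > 0, and set a = (2^{p/(p+1)} (p+1)^{1/(p+1)} / (p-1)) · α^{-(p-1)/(p+1)}. Then the function v : [0,∞) → ℝ defined by v(x) = (2(p+1)/(p-1)²)^{1/(p-1)} · (a+x)^{-2/(p-1)} is positive, twice continuously differentiable, and satisfies v''(x) = v(x)^p for all x ≥ 0, v'(0) = -α, and v(x) → 0 as x → ∞. -/

import Mathlib

open Real Set Filter MeasureTheory

/-- For `p > 1` and `α > 0`, the explicit function
`v(x) = (2(p+1)/(p-1)²)^{1/(p-1)} (a+x)^{-2/(p-1)}` with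
`a = (2^{p/(p+1)} (p+1)^{1/(p+1)}/(p-1)) α^{-(p-1)/(p+1)}` is positive, `C²` on `[0,∞)`,
and solves `v'' = v^p` on `[0,∞)` with `v'(0) = -α` and `v(x) → 0` as `x → ∞`. -/
theorem stmt_0 (p α : ℝ) (hp : 1 < p) (hα : 0 < α)
    (a : ℝ)
    (ha : a = (2 ^ (p / (p + 1)) * (p + 1) ^ (1 / (p + 1)) / (p - 1)) * α ^ (-(p - 1) / (p + 1)))
    (v : ℝ → ℝ)
    (hv : ∀ x, v x = (2 * (p + 1) / (p - 1) ^ 2) ^ (1 / (p - 1)) * (a + x) ^ (-2 / (p - 1))) :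
    (∀ x ≥ 0, 0 < v x) ∧
    ContDiffOn ℝ 2 v (Ici 0) ∧
    (∀ x ≥ 0, derivWithin (derivWithin v (Ici 0)) (Ici 0) x = v x ^ p) ∧
    derivWithin v (Ici 0) 0 = -α ∧
    Tendsto v atTop (nhds 0) := by
  have hm : (0:ℝ) < p - 1 := by linarith
  have hq : (0:ℝ) < p + 1 := by linarith
  have hm' : p - 1 ≠ 0 := ne_of_gt hm
  have hq' : p + 1 ≠ 0 := ne_of_gt hq
  set β : ℝ := -2 / (p - 1) with hβ
  set C : ℝ := (2 * (p + 1) / (p - 1) ^ 2) ^ (1 / (p - 1)) with hC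
  have hbase : (0:ℝ) < 2 * (p + 1) / (p - 1) ^ 2 := by positivity
  have hCpos : 0 < C := rpow_pos_of_pos hbase _
  have hapos : 0 < a := by
    rw [ha]; positivity
  have hax : ∀ x : ℝ, 0 ≤ x → 0 < a + x := fun x hx => by linarith
  have hvpos : ∀ x ≥ (0:ℝ), 0 < v x := by
    intro x hx
    rw [hv x]
    exact mul_pos hCpos (rpow_pos_of_pos (hax x hx) _)
  have hd1 : ∀ x : ℝ, 0 ≤ x → HasDerivAt v (C * β * (a + x) ^ (β - 1)) x := by
    intro x hx
    have h1 : HasDerivAt (fun y : ℝ => a + y) 1 x := by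
      simpa using (hasDerivAt_id x).const_add a
    have h2 := (h1.rpow_const (p := β) (Or.inl (ne_of_gt (hax x hx)))).const_mul C
    have hveq : v = fun y => C * (a + y) ^ β := funext hv
    rw [hveq]
    exact h2.congr_deriv (by ring)
  have huD : UniqueDiffOn ℝ (Ici (0:ℝ)) := uniqueDiffOn_Ici 0
  have hdW : ∀ x ∈ Ici (0:ℝ), derivWithin v (Ici 0) x = C * β * (a + x) ^ (β - 1) := by
    intro x hx
    exact ((hd1 x hx).hasDerivWithinAt).derivWithin (huD x hx)
  have hd2 : ∀ x : ℝ, 0 ≤ x →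
      HasDerivAt (fun y => C * β * (a + y) ^ (β - 1)) (C * β * (β - 1) * (a + x) ^ (β - 2)) x := by
    intro x hx
    have h1 : HasDerivAt (fun y : ℝ => a + y) 1 x := by
      simpa using (hasDerivAt_id x).const_add a
    have h2 := (h1.rpow_const (p := β - 1) (Or.inl (ne_of_gt (hax x hx)))).const_mul (C * β)
    have he : β - 2 = β - 1 - 1 := by ring
    rw [he]
    exact h2.congr_deriv (by ring)
  have hdW2 : ∀ x ∈ Ici (0:ℝ), derivWithin (derivWithin v (Ici 0)) (Ici 0) x
      = C * β * (β - 1) * (a + x) ^ (β - 2) := by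
    intro x hx
    rw [derivWithin_congr hdW (hdW x hx)]
    exact ((hd2 x hx).hasDerivWithinAt).derivWithin (huD x hx)
  have hCp1 : C ^ (p - 1) = 2 * (p + 1) / (p - 1) ^ 2 := by
    rw [hC, ← Real.rpow_mul hbase.le, one_div_mul_cancel hm', Real.rpow_one]
  have hCp : C * β * (β - 1) = C ^ p := by
    rw [show p = 1 + (p - 1) by ring, Real.rpow_add hCpos, Real.rpow_one, hCp1, hβ]
    field_simp
    ring
  have hβp : β - 2 = β * p := by rw [hβ]; field_simp; ring
  refine ⟨hvpos, ?_, ?_, ?_, ?_⟩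
  · -- ContDiffOn
    intro x hx
    have h1 : ContDiffAt ℝ 2 (fun y : ℝ => a + y) x := (contDiff_const.add contDiff_id).contDiffAt
    have h2 : ContDiffAt ℝ 2 v x := by
      have h3 := (h1.rpow_const_of_ne (p := β) (ne_of_gt (hax x hx))).const_smul C
      have hveq : v = fun y => C • (a + y) ^ β := funext fun y => by simp [hv y]
      rw [hveq]; exact h3
    exact h2.contDiffWithinAt
  · -- ODE
    intro x hx
    rw [hdW2 x hx, hv x,
      Real.mul_rpow hCpos.le (rpow_pos_of_pos (hax x hx) _).le,
      ← Real.rpow_mul (hax x hx).le, ← hβp, hCp]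
  · -- v'(0) = -α
    have h0 : derivWithin v (Ici 0) 0 = C * β * (a + 0) ^ (β - 1) := hdW 0 self_mem_Ici
    rw [h0, add_zero]
    have key : C * (2 / (p - 1)) * a ^ (β - 1) = α := by
      have h2m : (0:ℝ) < 2 / (p - 1) := by positivity
      have hL : 0 < C * (2 / (p - 1)) * a ^ (β - 1) :=
        mul_pos (mul_pos hCpos h2m) (rpow_pos_of_pos hapos _)
      have hKpos : (0:ℝ) < 2 ^ (p / (p + 1)) * (p + 1) ^ (1 / (p + 1)) / (p - 1) := by positivity
      refine Real.log_injOn_pos (mem_Ioi.mpr hL) (mem_Ioi.mpr hα) ?_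
      have l1 : log C = (1 / (p - 1)) * (log 2 + log (p + 1) - 2 * log (p - 1)) := by
        rw [hC, Real.log_rpow hbase, Real.log_div (by positivity) (by positivity),
          Real.log_mul (by norm_num) hq', Real.log_pow]
        push_cast; ring
      have l2 : log a = (p / (p + 1)) * log 2 + (1 / (p + 1)) * log (p + 1) - log (p - 1)
          + (-(p - 1) / (p + 1)) * log α := by
        rw [ha, Real.log_mul (ne_of_gt hKpos) (ne_of_gt (rpow_pos_of_pos hα _)),
          Real.log_div (by positivity) hm', Real.log_mul (by positivity) (by positivity),
          Real.log_rpow two_pos, Real.log_rpow hq, Real.log_rpow hα]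
        try ring
      rw [Real.log_mul (ne_of_gt (mul_pos hCpos h2m)) (ne_of_gt (rpow_pos_of_pos hapos _)),
        Real.log_mul (ne_of_gt hCpos) (ne_of_gt h2m), Real.log_rpow hapos,
        Real.log_div (by norm_num) hm', l1, l2, hβ]
      field_simp
      ring
    have hneg : C * β = -(C * (2 / (p - 1))) := by rw [hβ]; ring
    rw [hneg, neg_mul, key]
  · -- tendsto
    have hveq : v = fun y => C * (a + y) ^ β := funext hv
    rw [hveq]
    have hβneg : β = -(2 / (p - 1)) := by rw [hβ]; ring
    have h1 : Tendsto (fun y : ℝ => a + y) atTop atTop := tendsto_atTop_add_const_left _ a tendsto_id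
    have h2 : Tendsto (fun t : ℝ => t ^ β) atTop (nhds 0) := by
      rw [hβneg]; exact tendsto_rpow_neg_atTop (by positivity)
    have h3 := (h2.comp h1).const_mul C
    simpa using h3
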